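/- Let D_c, D_a > 0, D_eff = 2 D_c D_a / (D_c + D_a), and define c(x,t) = a(x,t) = 2 + e^{-π² D_eff t} cos(πx) and w(x,t) = ((D_a - D_c)/(D_a + D_c)) · (-π e^{-π² D_eff t} sin(πx)) / (2 + e^{-π² D_eff t} cos(πx)). Then on [0,1] × (0,∞): (i) ∂c/∂t = D_c (∂²c/∂x² + ∂/∂x(c·w)), (ii) ∂a/∂t = D_a (∂²a/∂x² - ∂/∂x(a·w)), (iii) c - a = 0, and (iv) the no-flux boundary conditions c_x + c w = 0 and a_x - a w = 0 hold at x = 0 and x = 1. -/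

import Mathlib

open Real

/-- Effective diffusion coefficient. -/
noncomputable def Deff (Dc Da : ℝ) : ℝ := 2 * Dc * Da / (Dc + Da)

/-- Exact cation concentration for the electro-neutral Nernst–Planck system. -/
noncomputable def cSol (Dc Da x t : ℝ) : ℝ :=
  2 + Real.exp (-π ^ 2 * Deff Dc Da * t) * Real.cos (π * x)

/-- Exact anion concentration (equal to the cation concentration). -/
noncomputable def aSol (Dc Da x t : ℝ) : ℝ :=
  2 + Real.exp (-π ^ 2 * Deff Dc Da * t) * Real.cos (π * x)

/-- Exact electric potential gradient. -/
noncomputable def wSol (Dc Da x t : ℝ) : ℝ :=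
  ((Da - Dc) / (Da + Dc)) *
    (-π * Real.exp (-π ^ 2 * Deff Dc Da * t) * Real.sin (π * x)) /
    (2 + Real.exp (-π ^ 2 * Deff Dc Da * t) * Real.cos (π * x))

lemma aSol_eq_cSol : aSol = cSol := rfl

section aux
variable (Dc Da x t : ℝ)

lemma hasDerivAt_pix : HasDerivAt (fun ξ : ℝ => π * ξ) π x := by
  simpa using (hasDerivAt_id x).const_mul π

lemma hasDerivAt_cSol_x :
    HasDerivAt (fun ξ => cSol Dc Da ξ t)
      (Real.exp (-π ^ 2 * Deff Dc Da * t) * (-Real.sin (π * x) * π)) x := by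
  have h2 : HasDerivAt (fun ξ : ℝ => Real.cos (π * ξ)) (-Real.sin (π * x) * π) x :=
    (hasDerivAt_pix x).cos
  simpa only [cSol] using
    (h2.const_mul (Real.exp (-π ^ 2 * Deff Dc Da * t))).const_add 2

lemma deriv_cSol_x :
    deriv (fun ξ => cSol Dc Da ξ t) x
      = Real.exp (-π ^ 2 * Deff Dc Da * t) * (-Real.sin (π * x) * π) :=
  (hasDerivAt_cSol_x Dc Da x t).deriv

lemma deriv_cSol_xx :
    deriv (fun ξ => deriv (fun ξ' => cSol Dc Da ξ' t) ξ) x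
      = Real.exp (-π ^ 2 * Deff Dc Da * t) * (-(Real.cos (π * x) * π) * π) := by
  have hfun : (fun ξ => deriv (fun ξ' => cSol Dc Da ξ' t) ξ)
      = fun ξ => Real.exp (-π ^ 2 * Deff Dc Da * t) * (-Real.sin (π * ξ) * π) := by
    funext ξ; exact deriv_cSol_x Dc Da ξ t
  rw [hfun]
  have h2 : HasDerivAt (fun ξ : ℝ => Real.sin (π * ξ)) (Real.cos (π * x) * π) x :=
    (hasDerivAt_pix x).sin
  exact ((h2.neg.mul_const π).const_mul (Real.exp (-π ^ 2 * Deff Dc Da * t))).deriv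

lemma deriv_cSol_t :
    deriv (fun τ => cSol Dc Da x τ) t
      = Real.exp (-π ^ 2 * Deff Dc Da * t) * (-π ^ 2 * Deff Dc Da) * Real.cos (π * x) := by
  have h1 : HasDerivAt (fun τ : ℝ => -π ^ 2 * Deff Dc Da * τ) (-π ^ 2 * Deff Dc Da) t := by
    simpa only [mul_one] using (hasDerivAt_id' t).const_mul (-π ^ 2 * Deff Dc Da)
  have h2 := ((h1.exp.mul_const (Real.cos (π * x))).const_add 2)
  simpa only [cSol] using h2.deriv

lemma den_pos (hDc : 0 < Dc) (hDa : 0 < Da) (ht : 0 ≤ t) :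
    0 < 2 + Real.exp (-π ^ 2 * Deff Dc Da * t) * Real.cos (π * x) := by
  have hD : 0 ≤ Deff Dc Da := by
    unfold Deff; positivity
  have hE1 : Real.exp (-π ^ 2 * Deff Dc Da * t) ≤ 1 := by
    have hle : -π ^ 2 * Deff Dc Da * t ≤ 0 := by
      nlinarith [mul_nonneg hD ht, sq_nonneg π]
    calc Real.exp (-π ^ 2 * Deff Dc Da * t) ≤ Real.exp 0 := Real.exp_le_exp.mpr hle
      _ = 1 := Real.exp_zero
  have hE0 : 0 < Real.exp (-π ^ 2 * Deff Dc Da * t) := Real.exp_pos _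
  nlinarith [Real.neg_one_le_cos (π * x), Real.cos_le_one (π * x)]

lemma cw_eq (hDc : 0 < Dc) (hDa : 0 < Da) (ht : 0 ≤ t) :
    cSol Dc Da x t * wSol Dc Da x t
      = ((Da - Dc) / (Da + Dc)) *
          (-π * Real.exp (-π ^ 2 * Deff Dc Da * t) * Real.sin (π * x)) := by
  have hden := (den_pos Dc Da x t hDc hDa ht).ne'
  unfold cSol wSol
  rw [mul_comm]
  exact div_mul_cancel₀ _ hden

lemma deriv_cw (hDc : 0 < Dc) (hDa : 0 < Da) (ht : 0 ≤ t) :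
    deriv (fun ξ => cSol Dc Da ξ t * wSol Dc Da ξ t) x
      = ((Da - Dc) / (Da + Dc)) *
          (-π * Real.exp (-π ^ 2 * Deff Dc Da * t)) * (Real.cos (π * x) * π) := by
  have hfun : (fun ξ => cSol Dc Da ξ t * wSol Dc Da ξ t)
      = fun ξ => ((Da - Dc) / (Da + Dc)) *
          (-π * Real.exp (-π ^ 2 * Deff Dc Da * t)) * Real.sin (π * ξ) := by
    funext ξ
    rw [cw_eq Dc Da ξ t hDc hDa ht]; ring
  rw [hfun]
  exact (((hasDerivAt_pix x).sin).const_mul _).deriv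

lemma wSol_bd0 : wSol Dc Da 0 t = 0 := by
  simp [wSol]

lemma wSol_bd1 : wSol Dc Da 1 t = 0 := by
  simp [wSol]

end aux

/-- The stated functions solve the electro-neutral Nernst–Planck system on
`[0,1] × (0,∞)`, together with the electro-neutrality constraint and no-flux
boundary conditions. -/
theorem ennpe_exact_solution (Dc Da : ℝ) (hDc : 0 < Dc) (hDa : 0 < Da) :
    (∀ x ∈ Set.Icc (0:ℝ) 1, ∀ t ∈ Set.Ioi (0:ℝ),
      -- (i) cation transport equation
      deriv (fun τ => cSol Dc Da x τ) t
        = Dc * (deriv (fun ξ => deriv (fun ξ' => cSol Dc Da ξ' t) ξ) x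
            + deriv (fun ξ => cSol Dc Da ξ t * wSol Dc Da ξ t) x)) ∧
    (∀ x ∈ Set.Icc (0:ℝ) 1, ∀ t ∈ Set.Ioi (0:ℝ),
      -- (ii) anion transport equation
      deriv (fun τ => aSol Dc Da x τ) t
        = Da * (deriv (fun ξ => deriv (fun ξ' => aSol Dc Da ξ' t) ξ) x
            - deriv (fun ξ => aSol Dc Da ξ t * wSol Dc Da ξ t) x)) ∧
    (∀ x ∈ Set.Icc (0:ℝ) 1, ∀ t ∈ Set.Ioi (0:ℝ),
      -- (iii) electro-neutrality
      cSol Dc Da x t - aSol Dc Da x t = 0) ∧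
    (∀ t ∈ Set.Ioi (0:ℝ),
      -- (iv) no-flux boundary conditions at x = 0 and x = 1
      deriv (fun ξ => cSol Dc Da ξ t) 0 + cSol Dc Da 0 t * wSol Dc Da 0 t = 0 ∧
      deriv (fun ξ => cSol Dc Da ξ t) 1 + cSol Dc Da 1 t * wSol Dc Da 1 t = 0 ∧
      deriv (fun ξ => aSol Dc Da ξ t) 0 - aSol Dc Da 0 t * wSol Dc Da 0 t = 0 ∧
      deriv (fun ξ => aSol Dc Da ξ t) 1 - aSol Dc Da 1 t * wSol Dc Da 1 t = 0) := by
  have hsum : Da + Dc ≠ 0 := by positivity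
  have hsum' : Dc + Da ≠ 0 := by positivity
  refine ⟨?_, ?_, ?_, ?_⟩
  · intro x _ t ht
    have ht' : (0:ℝ) ≤ t := le_of_lt ht
    rw [deriv_cSol_t, deriv_cSol_xx, deriv_cw Dc Da x t hDc hDa ht']
    unfold Deff
    field_simp
    ring
  · intro x _ t ht
    have ht' : (0:ℝ) ≤ t := le_of_lt ht
    rw [aSol_eq_cSol, deriv_cSol_t, deriv_cSol_xx, deriv_cw Dc Da x t hDc hDa ht']
    unfold Deff
    field_simp
    ring
  · intro x _ t _
    rw [aSol_eq_cSol]; ring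
  · intro t _
    rw [aSol_eq_cSol]
    refine ⟨?_, ?_, ?_, ?_⟩ <;>
      simp [deriv_cSol_x, wSol_bd0, wSol_bd1, Real.sin_pi]
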